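/- Let M be a real 4×4 matrix which is invertible, has det M = 1, and is physically realizable in the sense that its Cloude coherency matrix C(M) = (1/4) Σ_{i,j=0}^{3} M_{ij} (σ_i ⊗ σ_j*) is a positive semidefinite Hermitian 4×4 complex matrix. Then for every admissible Stokes vector s ∈ ℝ⁴ one has (M s)ᵀ G (M s) ≥ sᵀ G s, i.e. the Minkowski metric of the Stokes vector cannot decrease under a physically realizable unit-determinant Mueller transformation. -/

import Mathlib

open Matrix Kronecker ComplexOrder
set_option maxHeartbeats 2000000
open MeasureTheory Pointwise

noncomputable def G : Matrix (Fin 4) (Fin 4) ℝ := Matrix.diagonal ![1, -1, -1, -1]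

def StokesAdmissible (s : Fin 4 → ℝ) : Prop := 0 ≤ s 0 ∧ 0 ≤ s ⬝ᵥ G.mulVec s

noncomputable def pauli : Fin 4 → Matrix (Fin 2) (Fin 2) ℂ :=
  ![!![1, 0; 0, 1], !![1, 0; 0, -1], !![0, 1; 1, 0], !![0, -Complex.I; Complex.I, 0]]

noncomputable def cloudeCCM (M : Matrix (Fin 4) (Fin 4) ℝ) :
    Matrix (Fin 2 × Fin 2) (Fin 2 × Fin 2) ℂ :=
  (1 / 4 : ℂ) • ∑ i : Fin 4, ∑ j : Fin 4,
    (M i j : ℂ) • (pauli i ⊗ₖ (pauli j).map (starRingEnd ℂ))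

namespace MuellerAux

/-- The Minkowski quadratic form, explicitly. -/
def Qf (s : Fin 4 → ℝ) : ℝ := s 0 ^ 2 - s 1 ^ 2 - s 2 ^ 2 - s 3 ^ 2

lemma Qf_eq (s : Fin 4 → ℝ) : s ⬝ᵥ G.mulVec s = Qf s := by
  simp [G, dotProduct, Matrix.mulVec_diagonal, Fin.sum_univ_four, Qf]
  ring

/-- The vector of Pauli quadratic forms of v. -/
noncomputable def w (v : Fin 2 → ℂ) : Fin 4 → ℝ :=
  ![Complex.normSq (v 0) + Complex.normSq (v 1),
    Complex.normSq (v 0) - Complex.normSq (v 1),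
    2 * ((starRingEnd ℂ) (v 0) * v 1).re,
    2 * ((starRingEnd ℂ) (v 0) * v 1).im]

lemma pauli_form (v : Fin 2 → ℂ) (i : Fin 4) :
    star v ⬝ᵥ (pauli i).mulVec v = ((w v i : ℝ) : ℂ) := by
  fin_cases i <;>
    simp [pauli, w, dotProduct, Matrix.mulVec, Fin.sum_univ_two, Complex.ext_iff,
      Complex.normSq_apply, Complex.mul_re, Complex.mul_im] <;>
    (try constructor) <;> ring

lemma conj_form (Q : Matrix (Fin 2) (Fin 2) ℂ) (x : Fin 2 → ℂ) :
    star (star x) ⬝ᵥ (Q.map (starRingEnd ℂ)).mulVec (star x)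
      = (starRingEnd ℂ) (star x ⬝ᵥ Q.mulVec x) := by
  simp [dotProduct, Matrix.mulVec, Fin.sum_univ_two, Matrix.map_apply, map_add,
    _root_.map_mul]
  try ring

lemma kron_form (A B : Matrix (Fin 2) (Fin 2) ℂ) (v u : Fin 2 → ℂ) :
    star (fun p : Fin 2 × Fin 2 => v p.1 * u p.2) ⬝ᵥ
      (A ⊗ₖ B).mulVec (fun p : Fin 2 × Fin 2 => v p.1 * u p.2)
      = (star v ⬝ᵥ A.mulVec v) * (star u ⬝ᵥ B.mulVec u) := by
  simp [dotProduct, Matrix.mulVec, Matrix.kroneckerMap_apply, Fintype.sum_prod_type,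
    Fin.sum_univ_two, star_mul']
  ring

lemma sum_mulVec' {ι : Type*} (s : Finset ι) (f : ι → Matrix (Fin 2 × Fin 2) (Fin 2 × Fin 2) ℂ)
    (v : Fin 2 × Fin 2 → ℂ) :
    Matrix.mulVec (∑ i ∈ s, f i) v = ∑ i ∈ s, Matrix.mulVec (f i) v := by
  funext j
  simp only [Matrix.mulVec, dotProduct, Finset.sum_apply, Matrix.sum_apply, Finset.sum_mul]
  exact Finset.sum_comm

lemma dotProduct_sum' {ι : Type*} (s : Finset ι) (u : Fin 2 × Fin 2 → ℂ)
    (f : ι → Fin 2 × Fin 2 → ℂ) :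
    u ⬝ᵥ (∑ i ∈ s, f i) = ∑ i ∈ s, u ⬝ᵥ f i := by
  simp only [dotProduct, Finset.sum_apply, Finset.mul_sum]
  exact Finset.sum_comm

lemma key_ineq (M : Matrix (Fin 4) (Fin 4) ℝ) (hphys : (cloudeCCM M).PosSemidef)
    (v x : Fin 2 → ℂ) :
    0 ≤ ∑ i : Fin 4, ∑ j : Fin 4, M i j * w v i * w x j := by
  set z : Fin 2 × Fin 2 → ℂ := fun p => v p.1 * (star x) p.2 with hz
  have h := hphys.dotProduct_mulVec_nonneg z
  have hC : star z ⬝ᵥ (cloudeCCM M).mulVec z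
      = (((1:ℝ)/4 * ∑ i : Fin 4, ∑ j : Fin 4, M i j * w v i * w x j : ℝ) : ℂ) := by
    rw [cloudeCCM, Matrix.smul_mulVec, dotProduct_smul, sum_mulVec', dotProduct_sum']
    have hterm : ∀ i : Fin 4, star z ⬝ᵥ Matrix.mulVec
        (∑ j : Fin 4, (M i j : ℂ) • (pauli i ⊗ₖ (pauli j).map (starRingEnd ℂ))) z
        = ∑ j : Fin 4, ((M i j * w v i * w x j : ℝ) : ℂ) := by
      intro i
      rw [sum_mulVec', dotProduct_sum']
      refine Finset.sum_congr rfl fun j _ => ?_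
      rw [Matrix.smul_mulVec, dotProduct_smul]
      have : star z ⬝ᵥ (pauli i ⊗ₖ (pauli j).map (starRingEnd ℂ)).mulVec z
          = ((w v i : ℝ) : ℂ) * ((w x j : ℝ) : ℂ) := by
        rw [hz]
        rw [kron_form (pauli i) ((pauli j).map (starRingEnd ℂ)) v (star x)]
        rw [conj_form, pauli_form, pauli_form]
        simp [Complex.conj_ofReal]
      rw [this, smul_eq_mul]
      push_cast
      ring
    rw [Finset.sum_congr rfl fun i _ => hterm i, smul_eq_mul]
    push_cast
    ring
  rw [hC] at h
  rw [Complex.zero_le_real] at h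
  nlinarith [h]

lemma exists_w (r : Fin 4 → ℝ) (h0 : 0 ≤ r 0)
    (hp : r 0 ^ 2 = r 1 ^ 2 + r 2 ^ 2 + r 3 ^ 2) : ∃ x : Fin 2 → ℂ, w x = r := by
  have h1 : 0 ≤ r 0 + r 1 := by nlinarith [sq_nonneg (r 0 + r 1)]
  rcases eq_or_lt_of_le h1 with ha | ha
  · have hr1 : r 1 = - r 0 := by linarith
    have h23 : r 2 ^ 2 + r 3 ^ 2 = 0 := by nlinarith
    have hr2 : r 2 = 0 := by nlinarith [sq_nonneg (r 2), sq_nonneg (r 3)]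
    have hr3 : r 3 = 0 := by nlinarith [sq_nonneg (r 2), sq_nonneg (r 3)]
    refine ⟨![0, (Real.sqrt (r 0) : ℂ)], ?_⟩
    funext i
    have hs : Real.sqrt (r 0) * Real.sqrt (r 0) = r 0 := Real.mul_self_sqrt h0
    fin_cases i <;>
      simp [w, Complex.normSq_ofReal, hr1, hr2, hr3] <;> nlinarith [hs]
  · set t := Real.sqrt ((r 0 + r 1) / 2) with ht
    have ht2 : t ^ 2 = (r 0 + r 1) / 2 := Real.sq_sqrt (by linarith)
    have htpos : 0 < t := Real.sqrt_pos.2 (by linarith)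
    refine ⟨![(t : ℂ), (⟨r 2 / (2 * t), r 3 / (2 * t)⟩ : ℂ)], ?_⟩
    have hne : (t : ℝ) ≠ 0 := ne_of_gt htpos
    funext i
    fin_cases i <;>
      simp [w, Complex.normSq_ofReal, Complex.normSq_mk, Complex.mul_re, Complex.mul_im,
        Complex.conj_re, Complex.conj_im, Complex.ofReal_re, Complex.ofReal_im] <;>
      field_simp <;> nlinarith [ht2, htpos]

lemma mueller_cone (M : Matrix (Fin 4) (Fin 4) ℝ) (hphys : (cloudeCCM M).PosSemidef)
    (s : Fin 4 → ℝ) (h0 : 0 ≤ s 0) (hq : 0 ≤ Qf s) :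
    0 ≤ (M.mulVec s) 0 ∧ 0 ≤ Qf (M.mulVec s) := by
  have hsum : ∀ v x : Fin 2 → ℂ, 0 ≤ ∑ i : Fin 4, w v i * (M.mulVec (w x)) i := by
    intro v x
    have h := key_ineq M hphys v x
    have he : ∑ i : Fin 4, ∑ j : Fin 4, M i j * w v i * w x j
        = ∑ i : Fin 4, w v i * (M.mulVec (w x)) i := by
      refine Finset.sum_congr rfl fun i _ => ?_
      simp only [Matrix.mulVec, dotProduct, Finset.mul_sum]
      refine Finset.sum_congr rfl fun j _ => by ring
    linarith [he ▸ h]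
  have hpure : ∀ p : Fin 4 → ℝ, 0 ≤ p 0 → p 0 ^ 2 = p 1 ^ 2 + p 2 ^ 2 + p 3 ^ 2 →
      ∀ v : Fin 2 → ℂ, 0 ≤ ∑ i : Fin 4, w v i * (M.mulVec p) i := by
    intro p hp0 hpp v
    obtain ⟨x, hx⟩ := exists_w p hp0 hpp
    simpa [hx] using hsum v x
  set n := Real.sqrt (s 1 ^ 2 + s 2 ^ 2 + s 3 ^ 2) with hndef
  have hn2 : n ^ 2 = s 1 ^ 2 + s 2 ^ 2 + s 3 ^ 2 := Real.sq_sqrt (by positivity)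
  have hn0 : 0 ≤ n := Real.sqrt_nonneg _
  have hns : n ≤ s 0 := by
    nlinarith [hq, show Qf s = s 0 ^ 2 - s 1 ^ 2 - s 2 ^ 2 - s 3 ^ 2 from rfl, hn2]
  have hkey : ∀ v : Fin 2 → ℂ, 0 ≤ ∑ i : Fin 4, w v i * (M.mulVec s) i := by
    intro v
    rcases eq_or_lt_of_le hn0 with hn | hn
    · -- n = 0, spatial part vanishes
      have h1 : s 1 = 0 := by nlinarith [sq_nonneg (s 1), sq_nonneg (s 2), sq_nonneg (s 3)]
      have h2 : s 2 = 0 := by nlinarith [sq_nonneg (s 1), sq_nonneg (s 2), sq_nonneg (s 3)]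
      have h3 : s 3 = 0 := by nlinarith [sq_nonneg (s 1), sq_nonneg (s 2), sq_nonneg (s 3)]
      have hP := hpure ![s 0, s 0, 0, 0] (by simpa using h0) (by norm_num [Matrix.cons_val_two, Matrix.cons_val_three]) v
      have hR := hpure ![s 0, -(s 0), 0, 0] (by simpa using h0) (by norm_num [Matrix.cons_val_two, Matrix.cons_val_three]) v
      have hlin : ∀ k, (M.mulVec ![s 0, s 0, 0, 0]) k + (M.mulVec ![s 0, -(s 0), 0, 0]) k
          = 2 * (M.mulVec s) k := by
        intro k
        simp only [Matrix.mulVec, dotProduct, Finset.mul_sum, ← Finset.sum_add_distrib]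
        refine Finset.sum_congr rfl fun j _ => ?_
        fin_cases j <;> simp [h1, h2, h3] <;> ring
      have htot : ∑ i : Fin 4, w v i * (M.mulVec ![s 0, s 0, 0, 0]) i
          + ∑ i : Fin 4, w v i * (M.mulVec ![s 0, -(s 0), 0, 0]) i
          = 2 * ∑ i : Fin 4, w v i * (M.mulVec s) i := by
        rw [← Finset.sum_add_distrib, Finset.mul_sum]
        refine Finset.sum_congr rfl fun i _ => ?_
        have := hlin i
        ring_nf
        linear_combination (w v i) * this
      linarith
    · -- n > 0
      set P : Fin 4 → ℝ := fun i => if i = 0 then n * (s 0 + n) else (s 0 + n) * s i with hPdef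
      set R : Fin 4 → ℝ := fun i => if i = 0 then n * (s 0 - n) else (n - s 0) * s i with hRdef
      have hPR : ∀ j, P j + R j = (2 * n) * s j := by
        intro j
        rcases eq_or_ne j 0 with hj | hj
        · subst hj; simp [hPdef, hRdef]; ring
        · simp [hPdef, hRdef, hj]; ring
      have hP := hpure P (by
          have e0 : P 0 = n * (s 0 + n) := by simp [hPdef]
          rw [e0]; exact mul_nonneg hn0 (by linarith))
        (by
          have e0 : P 0 = n * (s 0 + n) := by simp [hPdef]
          have e1 : P 1 = (s 0 + n) * s 1 := by simp [hPdef]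
          have e2 : P 2 = (s 0 + n) * s 2 := by simp [hPdef]
          have e3 : P 3 = (s 0 + n) * s 3 := by simp [hPdef]
          rw [e0, e1, e2, e3]
          linear_combination (s 0 + n) ^ 2 * hn2) v
      have hR := hpure R (by
          have e0 : R 0 = n * (s 0 - n) := by simp [hRdef]
          rw [e0]; exact mul_nonneg hn0 (by linarith))
        (by
          have e0 : R 0 = n * (s 0 - n) := by simp [hRdef]
          have e1 : R 1 = (n - s 0) * s 1 := by simp [hRdef]
          have e2 : R 2 = (n - s 0) * s 2 := by simp [hRdef]
          have e3 : R 3 = (n - s 0) * s 3 := by simp [hRdef]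
          rw [e0, e1, e2, e3]
          linear_combination (n - s 0) ^ 2 * hn2) v
      have hlin : ∀ k, (M.mulVec P) k + (M.mulVec R) k = (2 * n) * (M.mulVec s) k := by
        intro k
        simp only [Matrix.mulVec, dotProduct, Finset.mul_sum, ← Finset.sum_add_distrib]
        refine Finset.sum_congr rfl fun j _ => ?_
        linear_combination (M k j) * (hPR j)
      have htot : ∑ i : Fin 4, w v i * (M.mulVec P) i + ∑ i : Fin 4, w v i * (M.mulVec R) i
          = (2 * n) * ∑ i : Fin 4, w v i * (M.mulVec s) i := by
        rw [← Finset.sum_add_distrib, Finset.mul_sum]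
        refine Finset.sum_congr rfl fun i _ => ?_
        linear_combination (w v i) * (hlin i)
      nlinarith [hP, hR, htot, hn]
  set r := M.mulVec s with hrdef
  have htest : ∀ p : Fin 4 → ℝ, 0 ≤ p 0 → p 0 ^ 2 = p 1 ^ 2 + p 2 ^ 2 + p 3 ^ 2 →
      0 ≤ ∑ i : Fin 4, p i * r i := by
    intro p hp0 hpp
    obtain ⟨v, hv⟩ := exists_w p hp0 hpp
    simpa [hv] using hkey v
  have ht1 := htest ![1, 1, 0, 0] (by norm_num) (by norm_num [Matrix.cons_val_two, Matrix.cons_val_three])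
  have ht2 := htest ![1, -1, 0, 0] (by norm_num) (by norm_num [Matrix.cons_val_two, Matrix.cons_val_three])
  simp [Fin.sum_univ_four] at ht1 ht2
  have hr0 : 0 ≤ r 0 := by linarith
  set m := Real.sqrt (r 1 ^ 2 + r 2 ^ 2 + r 3 ^ 2) with hmdef
  have hm2 : m ^ 2 = r 1 ^ 2 + r 2 ^ 2 + r 3 ^ 2 := Real.sq_sqrt (by positivity)
  have hm0 : 0 ≤ m := Real.sqrt_nonneg _
  have ht3 := htest ![m, -(r 1), -(r 2), -(r 3)] (by simpa using hm0)
    (by simp; nlinarith [hm2])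
  simp [Fin.sum_univ_four] at ht3
  refine ⟨hr0, ?_⟩
  rcases eq_or_lt_of_le hm0 with hm | hm
  · have hz : r 1 ^ 2 + r 2 ^ 2 + r 3 ^ 2 = 0 := by nlinarith [hm2]
    simp only [Qf]
    nlinarith [sq_nonneg (r 0)]
  · have hrm : m ≤ r 0 := by nlinarith [ht3, hm2]
    simp only [Qf]
    nlinarith [hm2]


/-- three-variable Cauchy-Schwarz with square roots -/
lemma dot3_le (a1 a2 a3 b1 b2 b3 : ℝ) :
    a1 * b1 + a2 * b2 + a3 * b3
      ≤ Real.sqrt (a1 ^ 2 + a2 ^ 2 + a3 ^ 2) * Real.sqrt (b1 ^ 2 + b2 ^ 2 + b3 ^ 2) := by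
  set S := a1 * b1 + a2 * b2 + a3 * b3 with hS
  rcases le_or_gt S 0 with h | h
  · exact h.trans (by positivity)
  · have hcs : S ^ 2 ≤ (a1 ^ 2 + a2 ^ 2 + a3 ^ 2) * (b1 ^ 2 + b2 ^ 2 + b3 ^ 2) := by
      nlinarith [sq_nonneg (a1 * b2 - a2 * b1), sq_nonneg (a1 * b3 - a3 * b1),
        sq_nonneg (a2 * b3 - a3 * b2)]
    calc S = Real.sqrt (S ^ 2) := (Real.sqrt_sq h.le).symm
    _ ≤ Real.sqrt ((a1 ^ 2 + a2 ^ 2 + a3 ^ 2) * (b1 ^ 2 + b2 ^ 2 + b3 ^ 2)) :=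
        Real.sqrt_le_sqrt hcs
    _ = _ := Real.sqrt_mul (by positivity) _

/-- spatial norm dominated by time component in the cone -/
lemma spatial_le (s : Fin 4 → ℝ) (h0 : 0 ≤ s 0) (hq : 0 ≤ Qf s) :
    Real.sqrt (s 1 ^ 2 + s 2 ^ 2 + s 3 ^ 2) ≤ s 0 := by
  have : s 1 ^ 2 + s 2 ^ 2 + s 3 ^ 2 ≤ s 0 ^ 2 := by
    have : Qf s = s 0 ^ 2 - s 1 ^ 2 - s 2 ^ 2 - s 3 ^ 2 := rfl
    linarith
  calc Real.sqrt (s 1 ^ 2 + s 2 ^ 2 + s 3 ^ 2) ≤ Real.sqrt (s 0 ^ 2) := Real.sqrt_le_sqrt this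
  _ = s 0 := Real.sqrt_sq h0

/-- Self-duality of the cone, easy direction: two cone vectors have nonneg dot product. -/
lemma dual_nonneg (a b : Fin 4 → ℝ) (ha0 : 0 ≤ a 0) (haq : 0 ≤ Qf a)
    (hb0 : 0 ≤ b 0) (hbq : 0 ≤ Qf b) :
    0 ≤ a 0 * b 0 + a 1 * b 1 + a 2 * b 2 + a 3 * b 3 := by
  have h1 := dot3_le (a 1) (a 2) (a 3) (-(b 1)) (-(b 2)) (-(b 3))
  have ha := spatial_le a ha0 haq
  have hb : Real.sqrt ((-(b 1)) ^ 2 + (-(b 2)) ^ 2 + (-(b 3)) ^ 2) ≤ b 0 := by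
    have := spatial_le b hb0 hbq
    simpa [neg_sq] using this
  have hsa : 0 ≤ Real.sqrt (a 1 ^ 2 + a 2 ^ 2 + a 3 ^ 2) := Real.sqrt_nonneg _
  have hsb : 0 ≤ Real.sqrt ((-(b 1)) ^ 2 + (-(b 2)) ^ 2 + (-(b 3)) ^ 2) := Real.sqrt_nonneg _
  nlinarith [mul_le_mul ha hb hsb ha0]

/-- From nonneg pairing with all cone vectors, conclude cone membership. -/
lemma dual_mem (y : Fin 4 → ℝ)
    (h : ∀ t : Fin 4 → ℝ, 0 ≤ t 0 → 0 ≤ Qf t →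
      0 ≤ t 0 * y 0 + t 1 * y 1 + t 2 * y 2 + t 3 * y 3) :
    0 ≤ y 0 ∧ 0 ≤ Qf y := by
  have h0 := h ![1, 0, 0, 0] (by norm_num) (by norm_num [Qf, Matrix.cons_val_two, Matrix.cons_val_three])
  simp at h0
  set m := Real.sqrt (y 1 ^ 2 + y 2 ^ 2 + y 3 ^ 2) with hm
  have hm2 : m ^ 2 = y 1 ^ 2 + y 2 ^ 2 + y 3 ^ 2 := Real.sq_sqrt (by positivity)
  have hm0 : 0 ≤ m := Real.sqrt_nonneg _
  have ht := h ![m, -(y 1), -(y 2), -(y 3)] (by simpa using hm0)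
    (by simp [Qf]; nlinarith [hm2])
  simp at ht
  refine ⟨h0, ?_⟩
  rcases eq_or_lt_of_le hm0 with hmz | hmz
  · have : y 1 ^ 2 + y 2 ^ 2 + y 3 ^ 2 = 0 := by nlinarith [hm2]
    simp only [Qf]; nlinarith [sq_nonneg (y 0)]
  · have : m ≤ y 0 := by nlinarith [ht, hm2]
    simp only [Qf]; nlinarith [hm2]

/-- bilinear Minkowski form -/
def bq (x y : Fin 4 → ℝ) : ℝ := x 0 * y 0 - x 1 * y 1 - x 2 * y 2 - x 3 * y 3

lemma bq_comm (x y : Fin 4 → ℝ) : bq x y = bq y x := by simp [bq]; ring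

lemma Qf_expand (x u : Fin 4 → ℝ) (e : ℝ) :
    Qf (x + e • u) = Qf x + 2 * e * bq u x + e ^ 2 * Qf u := by
  simp [Qf, bq, Pi.add_apply, Pi.smul_apply, smul_eq_mul]
  ring

lemma Qf_smul (c : ℝ) (x : Fin 4 → ℝ) : Qf (c • x) = c ^ 2 * Qf x := by
  simp [Qf, Pi.smul_apply, smul_eq_mul]; ring

/-- quadratic nonneg near zero forces vanishing linear coefficient -/
lemma lin_coeff_zero (a b δ : ℝ) (hδ : 0 < δ)
    (h : ∀ e : ℝ, |e| ≤ δ → 0 ≤ 2 * e * a + e ^ 2 * b) : a = 0 := by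
  by_contra hne
  have habs : 0 < |a| := abs_pos.2 hne
  set d := min δ (|a| / (|b| + 1)) with hd
  have hdpos : 0 < d := lt_min hδ (by positivity)
  have h1 := h d (by rw [abs_of_pos hdpos]; exact min_le_left _ _)
  have h2 := h (-d) (by rw [abs_neg, abs_of_pos hdpos]; exact min_le_left _ _)
  have hb1 : (0:ℝ) < |b| + 1 := by positivity
  have hdb : d * (|b| + 1) ≤ |a| := by
    have hmin : d ≤ |a| / (|b| + 1) := min_le_right _ _
    calc d * (|b| + 1) ≤ |a| / (|b| + 1) * (|b| + 1) := by nlinarith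
    _ = |a| := by field_simp
  have hbb : b ≤ |b| := le_abs_self b
  have p1 : d ^ 2 * b ≤ d ^ 2 * |b| := mul_le_mul_of_nonneg_left hbb (sq_nonneg d)
  have hdb2 : d * |b| ≤ |a| - d := by nlinarith
  have p2 : d * (d * |b|) ≤ d * (|a| - d) := mul_le_mul_of_nonneg_left hdb2 hdpos.le
  rcases abs_cases a with ⟨ha, ha'⟩ | ⟨ha, ha'⟩
  · have hapos : 0 < a := lt_of_le_of_ne ha' (Ne.symm hne)
    rw [ha] at p2
    nlinarith [h2, p1, p2, mul_pos hdpos hapos, sq_nonneg d]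
  · rw [ha] at p2
    nlinarith [h1, p1, p2, mul_pos hdpos (neg_pos.2 ha'), sq_nonneg d]


lemma bq_self (x : Fin 4 → ℝ) : bq x x = Qf x := by simp only [bq, Qf]; ring
lemma bq_add_smul (x y z : Fin 4 → ℝ) (e : ℝ) :
    bq x (y + e • z) = bq x y + e * bq x z := by
  simp only [bq, Pi.add_apply, Pi.smul_apply, smul_eq_mul]; ring
lemma bq_smul (x y : Fin 4 → ℝ) (e : ℝ) : bq x (e • y) = e * bq x y := by
  simp only [bq, Pi.smul_apply, smul_eq_mul]; ring

lemma small_perturb (t u : Fin 4 → ℝ) (h0 : 0 < t 0) (hq : 0 < Qf t) :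
    ∃ δ : ℝ, 0 < δ ∧ ∀ e : ℝ, |e| ≤ δ →
      0 < (t + e • u) 0 ∧ 0 < Qf (t + e • u) := by
  set X := 2 * |bq u t| + |Qf u| with hX
  have hX0 : 0 ≤ X := by positivity
  refine ⟨min 1 (min (t 0 / (2 * (|u 0| + 1))) (Qf t / (2 * (X + 1)))), by positivity,
    fun e he => ?_⟩
  have he1 : |e| ≤ 1 := le_trans he (min_le_left _ _)
  have hea : 0 ≤ |e| := abs_nonneg e
  have he2 : |e| * (2 * (|u 0| + 1)) ≤ t 0 := by
    have h' : |e| ≤ t 0 / (2 * (|u 0| + 1)) :=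
      le_trans he ((min_le_right _ _).trans (min_le_left _ _))
    have hpos : (0:ℝ) < 2 * (|u 0| + 1) := by positivity
    calc |e| * (2 * (|u 0| + 1)) ≤ (t 0 / (2 * (|u 0| + 1))) * (2 * (|u 0| + 1)) := by
          exact mul_le_mul_of_nonneg_right h' hpos.le
    _ = t 0 := by field_simp
  have he3 : |e| * (2 * (X + 1)) ≤ Qf t := by
    have h' : |e| ≤ Qf t / (2 * (X + 1)) :=
      le_trans he ((min_le_right _ _).trans (min_le_right _ _))
    have hpos : (0:ℝ) < 2 * (X + 1) := by positivity
    calc |e| * (2 * (X + 1)) ≤ (Qf t / (2 * (X + 1))) * (2 * (X + 1)) := by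
          exact mul_le_mul_of_nonneg_right h' hpos.le
    _ = Qf t := by field_simp
  constructor
  · have hco : (t + e • u) 0 = t 0 + e * u 0 := rfl
    rw [hco]
    have habs : -( |e| * |u 0|) ≤ e * u 0 := by
      rw [← abs_mul]
      exact neg_abs_le _
    nlinarith [mul_nonneg hea (abs_nonneg (u 0))]
  · rw [Qf_expand]
    have ha1 : -(2 * (|e| * |bq u t|)) ≤ 2 * e * bq u t := by
      have h' := neg_abs_le (e * bq u t)
      rw [abs_mul] at h'
      nlinarith
    have ha2 : -(|e| * |Qf u|) ≤ e ^ 2 * Qf u := by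
      have hsq : e ^ 2 ≤ |e| := by
        nlinarith [sq_abs e]
      have h1 : e ^ 2 * |Qf u| ≤ |e| * |Qf u| :=
        mul_le_mul_of_nonneg_right hsq (abs_nonneg _)
      have h2 : -(e ^ 2 * |Qf u|) ≤ e ^ 2 * Qf u := by
        nlinarith [neg_abs_le (Qf u), sq_nonneg e]
      linarith
    nlinarith [ha1, ha2, he3, mul_nonneg hea hX0]

lemma bq_nonneg (a b : Fin 4 → ℝ) (ha0 : 0 ≤ a 0) (haq : 0 ≤ Qf a)
    (hb0 : 0 ≤ b 0) (hbq : 0 ≤ Qf b) : 0 ≤ bq a b := by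
  have h1 := dot3_le (a 1) (a 2) (a 3) (b 1) (b 2) (b 3)
  have ha := spatial_le a ha0 haq
  have hb := spatial_le b hb0 hbq
  have hsb : 0 ≤ Real.sqrt (b 1 ^ 2 + b 2 ^ 2 + b 3 ^ 2) := Real.sqrt_nonneg _
  have hsa : 0 ≤ Real.sqrt (a 1 ^ 2 + a 2 ^ 2 + a 3 ^ 2) := Real.sqrt_nonneg _
  have := mul_le_mul ha hb hsb ha0
  simp only [bq]
  nlinarith

lemma dot_expand (t y : Fin 4 → ℝ) :
    t ⬝ᵥ y = t 0 * y 0 + t 1 * y 1 + t 2 * y 2 + t 3 * y 3 := by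
  simp [dotProduct, Fin.sum_univ_four]

lemma dotG (t y : Fin 4 → ℝ) : t ⬝ᵥ (G *ᵥ y) = bq t y := by
  simp [G, dotProduct, Matrix.mulVec_diagonal, Fin.sum_univ_four, bq]
  ring

lemma G_comp (y : Fin 4 → ℝ) (i : Fin 4) : (G *ᵥ y) i = ![1,-1,-1,-1] i * y i :=
  Matrix.mulVec_diagonal _ _ _

lemma GG_vec (y : Fin 4 → ℝ) : G *ᵥ (G *ᵥ y) = y := by
  funext i
  rw [G_comp, G_comp]
  fin_cases i <;> simp

lemma G_inK (t : Fin 4 → ℝ) (h0 : 0 ≤ t 0) (hq : 0 ≤ Qf t) :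
    0 ≤ (G *ᵥ t) 0 ∧ 0 ≤ Qf (G *ᵥ t) := by
  constructor
  · rw [G_comp]; simpa using h0
  · have : Qf (G *ᵥ t) = Qf t := by
      simp only [Qf, G_comp]; norm_num [Matrix.cons_val_two, Matrix.cons_val_three]
    rw [this]; exact hq
lemma G_ne (t : Fin 4 → ℝ) (ht : t ≠ 0) : G *ᵥ t ≠ 0 := by
  intro h
  apply ht
  have h2 : G *ᵥ (G *ᵥ t) = G *ᵥ 0 := by rw [h]
  rw [GG_vec, Matrix.mulVec_zero] at h2
  exact h2

lemma Qf_continuous : Continuous Qf := by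
  unfold Qf; fun_prop

lemma n2_pos (y : Fin 4 → ℝ) (hy : y ≠ 0) :
    0 < y 0 ^ 2 + y 1 ^ 2 + y 2 ^ 2 + y 3 ^ 2 := by
  rcases lt_or_ge 0 (y 0 ^ 2 + y 1 ^ 2 + y 2 ^ 2 + y 3 ^ 2) with h | h
  · exact h
  · exfalso
    apply hy
    funext i
    have h0 : y 0 = 0 := by nlinarith [sq_nonneg (y 0), sq_nonneg (y 1), sq_nonneg (y 2), sq_nonneg (y 3)]
    have h1 : y 1 = 0 := by nlinarith [sq_nonneg (y 0), sq_nonneg (y 1), sq_nonneg (y 2), sq_nonneg (y 3)]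
    have h2 : y 2 = 0 := by nlinarith [sq_nonneg (y 0), sq_nonneg (y 1), sq_nonneg (y 2), sq_nonneg (y 3)]
    have h3 : y 3 = 0 := by nlinarith [sq_nonneg (y 0), sq_nonneg (y 1), sq_nonneg (y 2), sq_nonneg (y 3)]
    fin_cases i <;> simpa

/-- The core spectral/volume lemma. -/
lemma core (A : Matrix (Fin 4) (Fin 4) ℝ)
    (hstrict : ∀ x : Fin 4 → ℝ, 0 ≤ x 0 → 0 ≤ Qf x → x ≠ 0 →
      0 < (A *ᵥ x) 0 ∧ 0 < Qf (A *ᵥ x)) :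
    ∃ lam : ℝ, 0 < lam ∧ A.det ^ 2 ≤ lam ^ 4 ∧ ∀ y, lam * Qf y ≤ Qf (A *ᵥ y) := by
  classical
  set N : (Fin 4 → ℝ) → ℝ := fun x => Qf (A *ᵥ x) with hN
  set bn : (Fin 4 → ℝ) → (Fin 4 → ℝ) → ℝ := fun x y => bq (A *ᵥ x) (A *ᵥ y) with hbn
  have hNc : Continuous N := by
    apply Qf_continuous.comp
    exact continuous_pi fun i => by unfold Matrix.mulVec dotProduct; fun_prop
  have hN_expand : ∀ x u e, N (x + e • u) = N x + 2 * e * bn u x + e ^ 2 * N u := by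
    intro x u e
    simp only [hN, hbn, Matrix.mulVec_add, Matrix.mulVec_smul]
    exact Qf_expand _ _ _
  have hbn_comm : ∀ x y, bn x y = bn y x := fun x y => bq_comm _ _
  have hN_smul : ∀ c x, N (c • x) = c ^ 2 * N x := by
    intro c x
    simp only [hN, Matrix.mulVec_smul]
    exact Qf_smul _ _
  -- the compact set S
  set n2 : (Fin 4 → ℝ) → ℝ := fun x => x 0 ^ 2 + x 1 ^ 2 + x 2 ^ 2 + x 3 ^ 2 with hn2
  have hn2c : Continuous n2 := by unfold n2; fun_prop
  set S : Set (Fin 4 → ℝ) := {x | (0 ≤ x 0 ∧ 0 ≤ Qf x) ∧ n2 x = 1} with hS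
  have hSclosed : IsClosed S := by
    apply IsClosed.inter
    · exact (isClosed_le continuous_const (continuous_apply 0)).inter
        (isClosed_le continuous_const Qf_continuous)
    · exact isClosed_eq hn2c continuous_const
  have hSsub : S ⊆ Metric.closedBall 0 1 := by
    intro x hx
    obtain ⟨-, hx2⟩ := hx
    rw [Metric.mem_closedBall, dist_zero_right]
    rw [pi_norm_le_iff_of_nonneg zero_le_one]
    intro i
    simp only [hn2] at hx2
    have hle : x i ^ 2 ≤ 1 := by
      fin_cases i <;> (try simp) <;>
        nlinarith [hx2, sq_abs (x 0), sq_abs (x 1), sq_abs (x 2), sq_abs (x 3),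
          abs_nonneg (x 0), abs_nonneg (x 1), abs_nonneg (x 2), abs_nonneg (x 3),
          sq_nonneg (x 0), sq_nonneg (x 1), sq_nonneg (x 2), sq_nonneg (x 3)]
    rw [Real.norm_eq_abs]
    have h2 : |x i| ^ 2 ≤ 1 := by rwa [sq_abs]
    nlinarith [abs_nonneg (x i)]
  have hScompact : IsCompact S :=
    (isCompact_closedBall (0 : Fin 4 → ℝ) 1).of_isClosed_subset hSclosed hSsub
  have he0S : (![1, 0, 0, 0] : Fin 4 → ℝ) ∈ S := by
    constructor
    · constructor <;> norm_num [Qf, Matrix.cons_val_two, Matrix.cons_val_three]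
    · norm_num [hn2, Matrix.cons_val_two, Matrix.cons_val_three]
  have hmemne : ∀ x ∈ S, x ≠ 0 := by
    intro x hx h0
    have := hx.2
    rw [h0] at this
    simp [hn2] at this
  have hNpos : ∀ x : Fin 4 → ℝ, 0 ≤ x 0 → 0 ≤ Qf x → x ≠ 0 → 0 < N x := by
    intro x h1 h2 h3
    exact (hstrict x h1 h2 h3).2
  -- maximize Qf/N over S
  have hφcont : ContinuousOn (fun x => Qf x / N x) S := by
    apply ContinuousOn.div Qf_continuous.continuousOn hNc.continuousOn
    intro x hx
    exact ne_of_gt (hNpos x hx.1.1 hx.1.2 (hmemne x hx))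
  obtain ⟨xs, hxsS, hxsmax⟩ := hScompact.exists_isMaxOn ⟨_, he0S⟩ hφcont
  have hxsne : xs ≠ 0 := hmemne xs hxsS
  have hNxs : 0 < N xs := hNpos xs hxsS.1.1 hxsS.1.2 hxsne
  have hQfxs : 0 < Qf xs := by
    have h1 : (0:ℝ) < Qf ![1,0,0,0] / N ![1,0,0,0] := by
      apply div_pos
      · norm_num [Qf, Matrix.cons_val_two, Matrix.cons_val_three]
      · exact hNpos _ (by norm_num) (by norm_num [Qf, Matrix.cons_val_two, Matrix.cons_val_three]) (by
          intro h
          have := congrFun h 0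
          norm_num at this)
    have h2 : Qf ![1,0,0,0] / N ![1,0,0,0] ≤ Qf xs / N xs := hxsmax he0S
    have h3 : 0 < Qf xs / N xs := lt_of_lt_of_le h1 h2
    exact (div_pos_iff.mp h3).resolve_right (fun h => absurd hNxs (by linarith [h.2])) |>.1
  have hxs0 : 0 < xs 0 := by
    rcases eq_or_lt_of_le hxsS.1.1 with h | h
    · exfalso
      have : Qf xs ≤ 0 := by
        simp only [Qf, ← h]
        nlinarith [sq_nonneg (xs 1), sq_nonneg (xs 2), sq_nonneg (xs 3)]
      linarith
    · exact h
  -- global maximality, cross-multiplied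
  have hmax : ∀ y : Fin 4 → ℝ, 0 ≤ y 0 → 0 ≤ Qf y → y ≠ 0 →
      Qf y * N xs ≤ Qf xs * N y := by
    intro y hy0 hyq hyne
    have hNy : 0 < N y := hNpos y hy0 hyq hyne
    set ny := Real.sqrt (n2 y) with hny
    have hn2y : 0 < n2 y := n2_pos y hyne
    have hnypos : 0 < ny := Real.sqrt_pos.2 hn2y
    have hny2 : ny ^ 2 = n2 y := Real.sq_sqrt hn2y.le
    set z := ny⁻¹ • y with hz
    have hzS : z ∈ S := by
      refine ⟨⟨?_, ?_⟩, ?_⟩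
      · simp only [hz, Pi.smul_apply, smul_eq_mul]
        positivity
      · rw [hz, Qf_smul]; positivity
      · simp only [hn2, hz, Pi.smul_apply, smul_eq_mul]
        field_simp
        simp only [hn2] at hny2 ⊢
        nlinarith [hny2]
    have h2 : Qf z / N z ≤ Qf xs / N xs := hxsmax hzS
    have hNz : 0 < N z := hNpos z hzS.1.1 hzS.1.2 (hmemne z hzS)
    have hQz : Qf z / N z = Qf y / N y := by
      rw [hz, Qf_smul, hN_smul]
      rw [mul_div_mul_left]
      positivity
    rw [hQz] at h2
    exact (div_le_div_iff₀ hNy hNxs).mp h2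
  -- eigenvalue equation at xs
  have heig : ∀ u : Fin 4 → ℝ, Qf xs * bn u xs - bq u xs * N xs = 0 := by
    intro u
    obtain ⟨δ, hδ, hpert⟩ := small_perturb xs u hxs0 hQfxs
    apply lin_coeff_zero _ (Qf xs * N u - Qf u * N xs) δ hδ
    intro e he
    obtain ⟨hp0, hpq⟩ := hpert e he
    have hne : xs + e • u ≠ 0 := by
      intro h
      rw [h] at hp0
      simp at hp0
    have h1 := hmax (xs + e • u) hp0.le hpq.le hne
    rw [Qf_expand, hN_expand] at h1
    nlinarith [h1]
  -- global form bound
  have hglobal : ∀ y : Fin 4 → ℝ, N xs * Qf y ≤ Qf xs * N y := by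
    intro y
    set α := bq xs y / Qf xs with hα
    set wv := y + (-α) • xs with hwv
    have horth : bq xs wv = 0 := by
      rw [hwv, bq_add_smul, bq_self, hα]
      field_simp
      ring
    have horth' : bq wv xs = 0 := by rw [bq_comm wv xs]; exact horth
    have hbnw : bn wv xs = 0 := by
      have h := heig wv
      rw [horth'] at h
      have h2 : Qf xs * bn wv xs = 0 := by linarith
      exact (mul_eq_zero.mp h2).resolve_left (ne_of_gt hQfxs)
    have hw : N xs * Qf wv ≤ Qf xs * N wv := by
      obtain ⟨δ, hδ, hpert⟩ := small_perturb xs wv hxs0 hQfxs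
      obtain ⟨hp0, hpq⟩ := hpert δ (by rw [abs_of_pos hδ])
      have hne : xs + δ • wv ≠ 0 := by
        intro h; rw [h] at hp0; simp at hp0
      have h1 := hmax (xs + δ • wv) hp0.le hpq.le hne
      rw [Qf_expand, hN_expand] at h1
      rw [horth', hbnw] at h1
      have h2 : δ ^ 2 * (Qf wv * N xs) ≤ δ ^ 2 * (Qf xs * N wv) := by nlinarith [h1]
      have hδ2 : 0 < δ ^ 2 := by positivity
      nlinarith [h2, hδ2]
    have hy_dec : y = wv + α • xs := by
      rw [hwv]; funext i; simp only [Pi.add_apply, Pi.smul_apply, smul_eq_mul]; ring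
    have hQy : Qf y = Qf wv + α ^ 2 * Qf xs := by
      rw [hy_dec, Qf_expand, bq_comm xs wv, horth']
      ring
    have hNy : N y = N wv + α ^ 2 * N xs := by
      rw [hy_dec, hN_expand, hbn_comm xs wv, hbnw]
      ring
    rw [hQy, hNy]
    nlinarith [hw, hQfxs, hNxs]
  -- now lam
  set lam := N xs / Qf xs with hlam
  have hlampos : 0 < lam := div_pos hNxs hQfxs
  refine ⟨lam, hlampos, ?_, ?_⟩
  · -- determinant bound via the volume argument
    set sq := Real.sqrt (Qf xs) with hsqdef
    have hsqpos : 0 < sq := Real.sqrt_pos.2 hQfxs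
    have hsq2 : sq ^ 2 = Qf xs := Real.sq_sqrt hQfxs.le
    set u0 := sq⁻¹ • xs with hu0
    have hQfu0 : Qf u0 = 1 := by
      rw [hu0, Qf_smul, ← hsq2]
      field_simp
    have hu00 : 0 < u0 0 := by
      rw [hu0]; simp only [Pi.smul_apply, smul_eq_mul]; positivity
    have hu0q : 0 ≤ Qf u0 := by rw [hQfu0]; norm_num
    have hbn_smul : ∀ (x : Fin 4 → ℝ) (c : ℝ) (y : Fin 4 → ℝ),
        bn x (c • y) = c * bn x y := by
      intro x c y
      simp only [hbn, Matrix.mulVec_smul, bq_smul]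
    have heig_xs : ∀ u, bn u xs = lam * bq u xs := by
      intro u
      have h := heig u
      rw [hlam]
      field_simp
      nlinarith [h]
    have heig0 : ∀ u, bn u u0 = lam * bq u u0 := by
      intro u
      rw [hu0, hbn_smul, bq_smul, heig_xs]
      ring
    set lf : (Fin 4 → ℝ) → ℝ := fun x => bq u0 x with hlf
    have hlc : Continuous lf := by
      have : lf = fun x => u0 0 * x 0 - u0 1 * x 1 - u0 2 * x 2 - u0 3 * x 3 := rfl
      rw [this]; fun_prop
    set Bv : (Fin 4 → ℝ) → (Fin 4 → ℝ) := fun x => G *ᵥ (Aᵀ *ᵥ (G *ᵥ (A *ᵥ x))) with hBv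
    have hGT : Gᵀ = G := by rw [G, Matrix.diagonal_transpose]
    have hvm : ∀ y : Fin 4 → ℝ, y ᵥ* G = G *ᵥ y := by
      intro y
      have := Matrix.vecMul_transpose G y
      rwa [hGT] at this
    have fact1 : ∀ t x : Fin 4 → ℝ, t ⬝ᵥ Bv x = bq (A *ᵥ (G *ᵥ t)) (A *ᵥ x) := by
      intro t x
      calc t ⬝ᵥ Bv x
          = (t ᵥ* G) ⬝ᵥ (Aᵀ *ᵥ (G *ᵥ (A *ᵥ x))) := Matrix.dotProduct_mulVec _ _ _
        _ = (G *ᵥ t) ⬝ᵥ (Aᵀ *ᵥ (G *ᵥ (A *ᵥ x))) := by rw [hvm]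
        _ = ((G *ᵥ t) ᵥ* Aᵀ) ⬝ᵥ (G *ᵥ (A *ᵥ x)) := Matrix.dotProduct_mulVec _ _ _
        _ = (A *ᵥ (G *ᵥ t)) ⬝ᵥ (G *ᵥ (A *ᵥ x)) := by rw [Matrix.vecMul_transpose]
        _ = bq (A *ᵥ (G *ᵥ t)) (A *ᵥ x) := dotG _ _
    have hBK : ∀ x : Fin 4 → ℝ, 0 ≤ x 0 → 0 ≤ Qf x → 0 ≤ (Bv x) 0 ∧ 0 ≤ Qf (Bv x) := by
      intro x hx0 hxq
      apply dual_mem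
      intro t ht0 htq
      rw [← dot_expand t (Bv x), fact1]
      rcases eq_or_ne x 0 with rfl | hxne
      · simp [Matrix.mulVec_zero, bq]
      rcases eq_or_ne t 0 with rfl | htne
      · simp [Matrix.mulVec_zero, bq]
      have hGt := G_inK t ht0 htq
      have hGtne := G_ne t htne
      have h1 := hstrict (G *ᵥ t) hGt.1 hGt.2 hGtne
      have h2 := hstrict x hx0 hxq hxne
      exact bq_nonneg _ _ h1.1.le h1.2.le h2.1.le h2.2.le
    have hlB : ∀ x, lf (Bv x) = lam * lf x := by
      intro x
      have e1 : lf (Bv x) = u0 ⬝ᵥ (G *ᵥ (Bv x)) := (dotG u0 (Bv x)).symm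
      have e2 : G *ᵥ (Bv x) = Aᵀ *ᵥ (G *ᵥ (A *ᵥ x)) := by
        rw [hBv]
        exact GG_vec _
      rw [e1, e2, Matrix.dotProduct_mulVec, Matrix.vecMul_transpose, dotG]
      have : bq (A *ᵥ u0) (A *ᵥ x) = bn x u0 := by
        rw [hbn]
        exact bq_comm _ _
      rw [this, heig0 x, bq_comm]
    set Om : Set (Fin 4 → ℝ) := {x | (0 ≤ x 0 ∧ 0 ≤ Qf x) ∧ lf x ≤ 1} with hOm
    set Bmat := G * Aᵀ * G * A with hBmat
    have hBveq : ∀ x, Bv x = Bmat *ᵥ x := by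
      intro x
      show G *ᵥ (Aᵀ *ᵥ (G *ᵥ (A *ᵥ x))) = Bmat *ᵥ x
      rw [hBmat, Matrix.mulVec_mulVec, Matrix.mulVec_mulVec, Matrix.mulVec_mulVec]
    have hGdet : G.det = -1 := by
      rw [G, Matrix.det_diagonal, Fin.prod_univ_four]
      norm_num [Matrix.cons_val_two, Matrix.cons_val_three]
    have hdetB : Bmat.det = A.det ^ 2 := by
      rw [hBmat, Matrix.det_mul, Matrix.det_mul, Matrix.det_mul, hGdet, Matrix.det_transpose]
      ring
    -- positive measure
    set U := {x : Fin 4 → ℝ | 0 < x 0 ∧ (0 < Qf x ∧ lf x < 1)} with hUdef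
    have hUopen : IsOpen U := by
      refine IsOpen.and (isOpen_lt continuous_const (continuous_apply 0)) ?_
      exact IsOpen.and (isOpen_lt continuous_const Qf_continuous)
        (isOpen_lt hlc continuous_const)
    have hUne : ((1:ℝ)/2) • u0 ∈ U := by
      refine ⟨?_, ?_, ?_⟩
      · simp only [Pi.smul_apply, smul_eq_mul]; positivity
      · rw [Qf_smul, hQfu0]; norm_num
      · have : lf (((1:ℝ)/2) • u0) = (1/2) * bq u0 u0 := bq_smul _ _ _
        rw [this, bq_self, hQfu0]
        norm_num
    have hUsub : U ⊆ Om := fun x hx => ⟨⟨hx.1.le, hx.2.1.le⟩, hx.2.2.le⟩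
    have hμpos : 0 < volume Om :=
      lt_of_lt_of_le (hUopen.measure_pos volume ⟨_, hUne⟩) (measure_mono hUsub)
    -- bounded, hence finite measure
    set m0 := Real.sqrt (u0 1 ^ 2 + u0 2 ^ 2 + u0 3 ^ 2) with hm0def
    have hm02 : m0 ^ 2 = u0 1 ^ 2 + u0 2 ^ 2 + u0 3 ^ 2 := Real.sq_sqrt (by positivity)
    have hm00 : 0 ≤ m0 := Real.sqrt_nonneg _
    have hgap : 0 < u0 0 - m0 := by
      have h1 : Qf u0 = u0 0 ^ 2 - u0 1 ^ 2 - u0 2 ^ 2 - u0 3 ^ 2 := rfl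
      nlinarith [hQfu0, hm02, hm00, hu00]
    have hbound : ∀ x ∈ Om, ‖x‖ ≤ (u0 0 - m0)⁻¹ := by
      intro x hx
      obtain ⟨⟨hx0, hxq⟩, hlx⟩ := hx
      have hms := spatial_le x hx0 hxq
      have hmxnn : 0 ≤ Real.sqrt (x 1 ^ 2 + x 2 ^ 2 + x 3 ^ 2) := Real.sqrt_nonneg _
      have hdot := dot3_le (u0 1) (u0 2) (u0 3) (x 1) (x 2) (x 3)
      have hmul : m0 * Real.sqrt (x 1 ^ 2 + x 2 ^ 2 + x 3 ^ 2) ≤ m0 * x 0 :=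
        mul_le_mul_of_nonneg_left hms hm00
      have h1 : (u0 0 - m0) * x 0 ≤ lf x := by
        have hlxe : lf x = u0 0 * x 0 - u0 1 * x 1 - u0 2 * x 2 - u0 3 * x 3 := rfl
        rw [hlxe, ← hm0def] at *
        nlinarith [hdot, hmul]
      have hx0le : x 0 ≤ (u0 0 - m0)⁻¹ := by
        rw [← one_div]
        rw [le_div_iff₀ hgap]
        nlinarith [h1, hlx]
      have hxq2 : x 1 ^ 2 + x 2 ^ 2 + x 3 ^ 2 ≤ x 0 ^ 2 := by
        have : Qf x = x 0 ^ 2 - x 1 ^ 2 - x 2 ^ 2 - x 3 ^ 2 := rfl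
        linarith
      rw [pi_norm_le_iff_of_nonneg (by positivity)]
      intro i
      rw [Real.norm_eq_abs]
      have habs : |x i| ≤ x 0 := by
        fin_cases i <;> (try simp) <;>
          nlinarith [sq_abs (x 0), sq_abs (x 1), sq_abs (x 2), sq_abs (x 3),
            abs_nonneg (x 0), abs_nonneg (x 1), abs_nonneg (x 2), abs_nonneg (x 3),
            hxq2, hx0, abs_of_nonneg hx0]
      exact habs.trans hx0le
    have hμfin : volume Om < ⊤ := by
      refine lt_of_le_of_lt (measure_mono ?_) ((isCompact_closedBall (0 : Fin 4 → ℝ)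
        ((u0 0 - m0)⁻¹)).measure_lt_top)
      intro x hx
      rw [Metric.mem_closedBall, dist_zero_right]
      exact hbound x hx
    -- image inclusion
    have himg : Bv '' Om ⊆ lam • Om := by
      rintro y ⟨x, hx, rfl⟩
      obtain ⟨⟨hx0, hxq⟩, hlx⟩ := hx
      have hBx := hBK x hx0 hxq
      refine Set.mem_smul_set.mpr ⟨lam⁻¹ • Bv x, ⟨⟨?_, ?_⟩, ?_⟩, ?_⟩
      · simp only [Pi.smul_apply, smul_eq_mul]
        have : 0 ≤ lam⁻¹ := by positivity
        exact mul_nonneg this hBx.1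
      · rw [Qf_smul]
        exact mul_nonneg (by positivity) hBx.2
      · have hls : lf (lam⁻¹ • Bv x) = lam⁻¹ * lf (Bv x) := bq_smul _ _ _
        rw [hls, hlB]
        rw [← mul_assoc, inv_mul_cancel₀ (ne_of_gt hlampos), one_mul]
        exact hlx
      · rw [smul_smul, mul_inv_cancel₀ (ne_of_gt hlampos), one_smul]
    have himgeq : volume (Bv '' Om) = ENNReal.ofReal |Bmat.det| * volume Om := by
      have hcoe : Bv = ⇑(Matrix.toLin' Bmat) := by
        funext x
        rw [hBveq]
        exact (Matrix.toLin'_apply _ _).symm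
      rw [hcoe, MeasureTheory.Measure.addHaar_image_linearMap, LinearMap.det_toLin']
    have hrank : Module.finrank ℝ (Fin 4 → ℝ) = 4 := by
      simp [Module.finrank_pi]
    have hsmOm : volume (lam • Om) = ENNReal.ofReal |lam ^ 4| * volume Om := by
      rw [MeasureTheory.Measure.addHaar_smul, hrank]
    have hle : volume (Bv '' Om) ≤ volume (lam • Om) := measure_mono himg
    rw [himgeq, hsmOm] at hle
    have hreal : |Bmat.det| ≤ |lam ^ 4| := by
      have h2 := (ENNReal.mul_le_mul_iff_left (ne_of_gt hμpos) (ne_of_lt hμfin)).mp hle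
      exact (ENNReal.ofReal_le_ofReal_iff (abs_nonneg _)).mp h2
    rw [hdetB] at hreal
    calc A.det ^ 2 = |A.det ^ 2| := (abs_of_nonneg (sq_nonneg _)).symm
      _ ≤ |lam ^ 4| := hreal
      _ = lam ^ 4 := abs_of_nonneg (by positivity)
  · intro y
    have h := hglobal y
    rw [hlam]
    rw [div_mul_eq_mul_div, div_le_iff₀ hQfxs]
    nlinarith [h]

lemma Qf_comb (a b : ℝ) (x y : Fin 4 → ℝ) :
    Qf (a • x + b • y) = a ^ 2 * Qf x + 2 * a * b * bq x y + b ^ 2 * Qf y := by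
  simp only [Qf, bq, Pi.add_apply, Pi.smul_apply, smul_eq_mul]
  ring

lemma cone_pos0 (x : Fin 4 → ℝ) (h0 : 0 ≤ x 0) (hq : 0 ≤ Qf x) (hne : x ≠ 0) :
    0 < x 0 := by
  rcases eq_or_lt_of_le h0 with h | h
  · exfalso
    apply hne
    have hq' : x 1 ^ 2 + x 2 ^ 2 + x 3 ^ 2 ≤ 0 := by
      have : Qf x = x 0 ^ 2 - x 1 ^ 2 - x 2 ^ 2 - x 3 ^ 2 := rfl
      nlinarith [this]
    have h1 : x 1 = 0 := by nlinarith [sq_nonneg (x 1), sq_nonneg (x 2), sq_nonneg (x 3)]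
    have h2 : x 2 = 0 := by nlinarith [sq_nonneg (x 1), sq_nonneg (x 2), sq_nonneg (x 3)]
    have h3 : x 3 = 0 := by nlinarith [sq_nonneg (x 1), sq_nonneg (x 2), sq_nonneg (x 3)]
    funext i
    fin_cases i <;> simp [← h, h1, h2, h3]
  · exact h

lemma Qf_pos_comp0 (y : Fin 4 → ℝ) (h : 0 < Qf y) : y 0 ≠ 0 := by
  intro h0
  have : Qf y = y 0 ^ 2 - y 1 ^ 2 - y 2 ^ 2 - y 3 ^ 2 := rfl
  nlinarith [sq_nonneg (y 1), sq_nonneg (y 2), sq_nonneg (y 3)]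

/-- Strictness of a physical M in the open cone. -/
lemma M_strict (M : Matrix (Fin 4) (Fin 4) ℝ) (hdet : M.det = 1)
    (hcone : ∀ s : Fin 4 → ℝ, 0 ≤ s 0 → 0 ≤ Qf s → 0 ≤ Qf (M.mulVec s))
    (t : Fin 4 → ℝ) (h0 : 0 < t 0) (hq : 0 < Qf t) : 0 < Qf (M *ᵥ t) := by
  have hge : 0 ≤ Qf (M *ᵥ t) := hcone t h0.le hq.le
  rcases eq_or_lt_of_le hge with heq | h
  swap
  · exact h
  exfalso
  have hdu : IsUnit M.det := by rw [hdet]; exact isUnit_one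
  have hker : ∀ u : Fin 4 → ℝ, bq (M *ᵥ u) (M *ᵥ t) = 0 := by
    intro u
    obtain ⟨δ, hδ, hpert⟩ := small_perturb t u h0 hq
    apply lin_coeff_zero _ (Qf (M *ᵥ u)) δ hδ
    intro e he
    obtain ⟨hp0, hpq⟩ := hpert e he
    have h2 := hcone (t + e • u) hp0.le hpq.le
    rw [Matrix.mulVec_add, Matrix.mulVec_smul, Qf_expand, ← heq] at h2
    linarith
  set y := M *ᵥ t with hy
  have hyz : y = 0 := by
    have hu := hker (M⁻¹ *ᵥ (G *ᵥ y))
    rw [Matrix.mulVec_mulVec, Matrix.mul_nonsing_inv M hdu, Matrix.one_mulVec] at hu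
    have hGy : ∀ i, (G *ᵥ y) i = ![1,-1,-1,-1] i * y i :=
      fun i => Matrix.mulVec_diagonal _ _ _
    have hbq : bq (G *ᵥ y) y = y 0 ^ 2 + y 1 ^ 2 + y 2 ^ 2 + y 3 ^ 2 := by
      simp only [bq, hGy]
      norm_num [Matrix.cons_val_two, Matrix.cons_val_three]
      ring
    rw [hbq] at hu
    funext i
    have h0' : y 0 = 0 := by nlinarith [sq_nonneg (y 0), sq_nonneg (y 1), sq_nonneg (y 2), sq_nonneg (y 3)]
    have h1 : y 1 = 0 := by nlinarith [sq_nonneg (y 0), sq_nonneg (y 1), sq_nonneg (y 2), sq_nonneg (y 3)]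
    have h2 : y 2 = 0 := by nlinarith [sq_nonneg (y 0), sq_nonneg (y 1), sq_nonneg (y 2), sq_nonneg (y 3)]
    have h3 : y 3 = 0 := by nlinarith [sq_nonneg (y 0), sq_nonneg (y 1), sq_nonneg (y 2), sq_nonneg (y 3)]
    fin_cases i <;> simp [h0', h1, h2, h3]
  have ht0 : t = 0 := by
    have : M⁻¹ *ᵥ (M *ᵥ t) = M⁻¹ *ᵥ 0 := by rw [← hy, hyz]
    rwa [Matrix.mulVec_mulVec, Matrix.nonsing_inv_mul M hdu, Matrix.one_mulVec,
      Matrix.mulVec_zero] at this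
  rw [ht0] at h0
  simp at h0

/-- The key scaled bound for each c ∈ (0,1). -/
lemma scaled_bound (M : Matrix (Fin 4) (Fin 4) ℝ) (hdet : M.det = 1)
    (hcone : ∀ s : Fin 4 → ℝ, 0 ≤ s 0 → 0 ≤ Qf s → 0 ≤ Qf (M.mulVec s))
    (c : ℝ) (hc0 : 0 < c) (hc1 : c < 1) :
    ∀ s : Fin 4 → ℝ, 0 ≤ Qf s →
      c ^ 2 * Qf s ≤ Qf (M *ᵥ ((Matrix.diagonal ![1, c, c, c]) *ᵥ s)) := by
  set E := Matrix.diagonal ![(1:ℝ), c, c, c] with hE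
  set A := M * E with hA
  have hEcomp : ∀ (s : Fin 4 → ℝ) i, (E *ᵥ s) i = ![(1:ℝ),c,c,c] i * s i :=
    fun s i => Matrix.mulVec_diagonal _ _ _
  have hEint : ∀ s : Fin 4 → ℝ, 0 ≤ s 0 → 0 ≤ Qf s → s ≠ 0 →
      0 < (E *ᵥ s) 0 ∧ 0 < Qf (E *ᵥ s) := by
    intro s h0 hq hne
    have hs0 : 0 < s 0 := cone_pos0 s h0 hq hne
    constructor
    · rw [hEcomp]; simpa using hs0
    · have hqe : Qf (E *ᵥ s) = s 0 ^ 2 - c ^ 2 * (s 1 ^ 2 + s 2 ^ 2 + s 3 ^ 2) := by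
        simp only [Qf, hEcomp]
        norm_num [Matrix.cons_val_two, Matrix.cons_val_three]
        ring
      have hs3 : s 1 ^ 2 + s 2 ^ 2 + s 3 ^ 2 ≤ s 0 ^ 2 := by
        have : Qf s = s 0 ^ 2 - s 1 ^ 2 - s 2 ^ 2 - s 3 ^ 2 := rfl
        linarith
      rw [hqe]
      have hc2 : c ^ 2 < 1 := by nlinarith
      nlinarith [mul_le_mul_of_nonneg_left hs3 (sq_nonneg c),
        mul_pos (show (0:ℝ) < 1 - c ^ 2 by nlinarith) (mul_pos hs0 hs0)]
  have hAQf : ∀ x : Fin 4 → ℝ, 0 ≤ x 0 → 0 ≤ Qf x → x ≠ 0 → 0 < Qf (A *ᵥ x) := by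
    intro x h0 hq hne
    have hEx := hEint x h0 hq hne
    have : A *ᵥ x = M *ᵥ (E *ᵥ x) := by rw [hA, ← Matrix.mulVec_mulVec]
    rw [this]
    exact M_strict M hdet hcone (E *ᵥ x) hEx.1 hEx.2
  have hAne : ∀ x : Fin 4 → ℝ, 0 ≤ x 0 → 0 ≤ Qf x → x ≠ 0 → (A *ᵥ x) 0 ≠ 0 :=
    fun x h0 hq hne => Qf_pos_comp0 _ (hAQf x h0 hq hne)
  -- the reference vector
  have he0K : (0:ℝ) ≤ (![1,0,0,0] : Fin 4 → ℝ) 0 ∧ 0 ≤ Qf ![1,0,0,0] ∧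
      (![1,0,0,0] : Fin 4 → ℝ) ≠ 0 := by
    refine ⟨by norm_num, by norm_num [Qf, Matrix.cons_val_two, Matrix.cons_val_three], ?_⟩
    intro h
    have := congrFun h 0
    norm_num at this
  -- sign propagation along segments
  have hsegment : ∀ x : Fin 4 → ℝ, 0 ≤ x 0 → 0 ≤ Qf x → x ≠ 0 →
      (0 < (A *ᵥ ![1,0,0,0]) 0 → 0 < (A *ᵥ x) 0) ∧
      ((A *ᵥ ![1,0,0,0]) 0 < 0 → (A *ᵥ x) 0 < 0) := by
    intro x h0 hq hne
    set e0v : Fin 4 → ℝ := ![1,0,0,0] with he0v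
    have hx0 : 0 < x 0 := cone_pos0 x h0 hq hne
    set p : ℝ → (Fin 4 → ℝ) := fun θ => (1 - θ) • e0v + θ • x with hp
    have hpK : ∀ θ ∈ Set.Icc (0:ℝ) 1, 0 ≤ (p θ) 0 ∧ 0 ≤ Qf (p θ) ∧ p θ ≠ 0 := by
      intro θ hθ
      obtain ⟨hθ0, hθ1⟩ := hθ
      have hcomp : (p θ) 0 = (1 - θ) + θ * x 0 := by
        simp [hp, he0v, Pi.add_apply, Pi.smul_apply, smul_eq_mul, Matrix.vecHead]
      have hpos : 0 < (p θ) 0 := by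
        rw [hcomp]
        nlinarith [mul_nonneg hθ0 hx0.le, mul_nonneg (sub_nonneg.2 hθ1) hx0.le]
      refine ⟨hpos.le, ?_, ?_⟩
      · rw [hp, Qf_comb]
        have hb := bq_nonneg e0v x (by norm_num [he0v]) (by norm_num [he0v, Qf, Matrix.cons_val_two, Matrix.cons_val_three]) h0 hq
        have hq0 : Qf e0v = 1 := by norm_num [he0v, Qf, Matrix.cons_val_two, Matrix.cons_val_three]
        rw [hq0]
        nlinarith [mul_nonneg (mul_nonneg (sub_nonneg.2 hθ1) hθ0) hb, sq_nonneg (1 - θ),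
          mul_nonneg (sq_nonneg θ) hq]
      · intro hz
        rw [hz] at hpos
        simp at hpos
    set f : ℝ → ℝ := fun θ => (A *ᵥ (p θ)) 0 with hf
    have hfeq : f = fun θ => (1 - θ) * (A *ᵥ e0v) 0 + θ * (A *ᵥ x) 0 := by
      funext θ
      rw [hf]
      simp only [hp, Matrix.mulVec_add, Matrix.mulVec_smul, Pi.add_apply, Pi.smul_apply,
        smul_eq_mul]
    have hfc : ContinuousOn f (Set.Icc 0 1) := by
      rw [hfeq]; fun_prop
    have hfne : ∀ θ ∈ Set.Icc (0:ℝ) 1, f θ ≠ 0 := by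
      intro θ hθ
      obtain ⟨h1, h2, h3⟩ := hpK θ hθ
      exact hAne (p θ) h1 h2 h3
    have hf0 : f 0 = (A *ᵥ e0v) 0 := by rw [hfeq]; norm_num
    have hf1 : f 1 = (A *ᵥ x) 0 := by rw [hfeq]; norm_num
    constructor
    · intro hpos
      by_contra hneg
      push_neg at hneg
      have hlt : (A *ᵥ x) 0 < 0 :=
        lt_of_le_of_ne hneg (hAne x h0 hq hne)
      have hmem : (0:ℝ) ∈ Set.Icc (f 1) (f 0) := by
        rw [hf0, hf1]
        exact ⟨hlt.le, hpos.le⟩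
      obtain ⟨θ, hθ, hfθ⟩ := intermediate_value_Icc' (by norm_num) hfc hmem
      exact hfne θ hθ hfθ
    · intro hneg
      by_contra hge
      push_neg at hge
      have hgt : 0 < (A *ᵥ x) 0 :=
        lt_of_le_of_ne hge (Ne.symm (hAne x h0 hq hne))
      have hmem : (0:ℝ) ∈ Set.Icc (f 0) (f 1) := by
        rw [hf0, hf1]
        exact ⟨hneg.le, hgt.le⟩
      obtain ⟨θ, hθ, hfθ⟩ := intermediate_value_Icc (by norm_num) hfc hmem
      exact hfne θ hθ hfθ
  -- choose the sign
  set eps : ℝ := if 0 < (A *ᵥ ![1,0,0,0]) 0 then 1 else -1 with heps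
  have heps2 : eps ^ 2 = 1 := by
    rw [heps]; split <;> norm_num
  set A' := eps • A with hA'
  have hstrict : ∀ x : Fin 4 → ℝ, 0 ≤ x 0 → 0 ≤ Qf x → x ≠ 0 →
      0 < (A' *ᵥ x) 0 ∧ 0 < Qf (A' *ᵥ x) := by
    intro x h0 hq hne
    have hsm : A' *ᵥ x = eps • (A *ᵥ x) := by
      rw [hA', Matrix.smul_mulVec]
    constructor
    · rw [hsm]
      simp only [Pi.smul_apply, smul_eq_mul]
      rcases lt_or_ge 0 ((A *ᵥ ![1,0,0,0]) 0) with hh | hh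
      · have := (hsegment x h0 hq hne).1 hh
        rw [heps, if_pos hh]
        linarith
      · have hne0 := hAne ![1,0,0,0] he0K.1 he0K.2.1 he0K.2.2
        have hlt : (A *ᵥ ![1,0,0,0]) 0 < 0 := lt_of_le_of_ne hh hne0
        have := (hsegment x h0 hq hne).2 hlt
        rw [heps, if_neg (not_lt.2 hh)]
        nlinarith
    · rw [hsm, Qf_smul, heps2, one_mul]
      exact hAQf x h0 hq hne
  obtain ⟨lam, hlam, hdet4, hbound⟩ := core A' hstrict
  have hdetE : E.det = c ^ 3 := by
    rw [hE, Matrix.det_diagonal, Fin.prod_univ_four]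
    norm_num [Matrix.cons_val_two, Matrix.cons_val_three]
    ring
  have hdetA' : A'.det ^ 2 = c ^ 6 := by
    have h4 : (eps ^ 4) = 1 := by rw [heps]; split <;> norm_num
    have hcard : Fintype.card (Fin 4) = 4 := by simp
    rw [hA', Matrix.det_smul, hA, Matrix.det_mul, hdet, hdetE, hcard, h4, one_mul, one_mul]
    ring
  have hclam : c ^ 2 ≤ lam := by
    have h8 : c ^ 8 ≤ c ^ 6 := by
      apply pow_le_pow_of_le_one hc0.le hc1.le
      norm_num
    have h86 : (c ^ 2) ^ 4 ≤ lam ^ 4 := by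
      rw [hdetA'] at hdet4
      calc (c ^ 2) ^ 4 = c ^ 8 := by ring
      _ ≤ c ^ 6 := h8
      _ ≤ lam ^ 4 := hdet4
    exact (pow_le_pow_iff_left₀ (by positivity) hlam.le (by norm_num)).mp h86
  intro s hq
  have hb := hbound s
  have hA's : Qf (A' *ᵥ s) = Qf (M *ᵥ (E *ᵥ s)) := by
    rw [hA', Matrix.smul_mulVec, Qf_smul, heps2, one_mul, hA, ← Matrix.mulVec_mulVec]
  rw [hA's] at hb
  have : c ^ 2 * Qf s ≤ lam * Qf s := by
    apply mul_le_mul_of_nonneg_right hclam hq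
  linarith

theorem final (M : Matrix (Fin 4) (Fin 4) ℝ) (hinv : IsUnit M) (hdet : M.det = 1)
    (hcone : ∀ t : Fin 4 → ℝ, 0 ≤ t 0 → 0 ≤ Qf t → 0 ≤ Qf (M *ᵥ t)) :
    ∀ s : Fin 4 → ℝ, StokesAdmissible s →
      s ⬝ᵥ G.mulVec s ≤ (M.mulVec s) ⬝ᵥ G.mulVec (M.mulVec s) := by
  intro s hs
  obtain ⟨hs0, hsq'⟩ := hs
  rw [Qf_eq] at hsq'
  rw [Qf_eq, Qf_eq]
  set sp : Fin 4 → ℝ := fun i => if i = 0 then 0 else s i with hsp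
  have hEs : ∀ c : ℝ, (Matrix.diagonal ![1,c,c,c]) *ᵥ s = s + (c - 1) • sp := by
    intro c
    funext i
    rw [Matrix.mulVec_diagonal]
    fin_cases i <;> simp [hsp] <;> ring
  set B := bq (M *ᵥ sp) (M *ᵥ s) with hB
  set Q2 := Qf (M *ᵥ sp) with hQ2
  set Q0 := Qf s with hQ0
  set Q1 := Qf (M *ᵥ s) with hQ1
  set Cst := 2 * |Q0| + 2 * |B| + |Q2| with hCst
  have hC0 : 0 ≤ Cst := by positivity
  have key : ∀ ε : ℝ, 0 < ε → Q0 ≤ Q1 + ε := by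
    intro ε hε
    set h : ℝ := min (1/2) (ε / (Cst + 1)) with hh
    have hh0 : 0 < h := lt_min (by norm_num) (by positivity)
    have hh1 : h ≤ 1/2 := min_le_left _ _
    have hc0 : 0 < 1 - h := by linarith
    have hc1 : 1 - h < 1 := by linarith
    have hb := scaled_bound M hdet hcone (1 - h) hc0 hc1 s hsq'
    rw [hEs (1 - h)] at hb
    have hcc : (1 - h : ℝ) - 1 = -h := by ring
    rw [hcc, Matrix.mulVec_add, Matrix.mulVec_smul, Qf_expand] at hb
    -- hb : (1-h)^2 * Q0 ≤ Q1 + 2*(-h)*B + (-h)^2 * Q2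
    have hsqh : h ^ 2 ≤ h := by nlinarith
    have e1 : 2 * h * (-|B|) ≤ 2 * h * B :=
      mul_le_mul_of_nonneg_left (neg_abs_le B) (by linarith)
    have e2a : h ^ 2 * Q2 ≤ h ^ 2 * |Q2| :=
      mul_le_mul_of_nonneg_left (le_abs_self Q2) (sq_nonneg h)
    have e2b : h ^ 2 * |Q2| ≤ h * |Q2| :=
      mul_le_mul_of_nonneg_right hsqh (abs_nonneg _)
    have e3 : 2 * h * Q0 ≤ 2 * h * |Q0| :=
      mul_le_mul_of_nonneg_left (le_abs_self Q0) (by linarith)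
    have e4 : 0 ≤ h ^ 2 * Q0 := mul_nonneg (sq_nonneg h) hsq'
    have hhC : h * Cst ≤ ε := by
      have h2 : h ≤ ε / (Cst + 1) := min_le_right _ _
      calc h * Cst ≤ (ε / (Cst + 1)) * Cst := mul_le_mul_of_nonneg_right h2 hC0
      _ ≤ ε := by
          rw [div_mul_eq_mul_div, div_le_iff₀ (by positivity)]
          nlinarith
    have hCexp : h * Cst = 2 * (h * |Q0|) + 2 * (h * |B|) + h * |Q2| := by
      rw [hCst]; ring
    nlinarith [hb, e1, e2a, e2b, e3, e4, hhC, hCexp]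

  by_contra hlt
  push_neg at hlt
  have := key ((Q0 - Q1) / 2) (by linarith)
  linarith

end MuellerAux

/-- A physically realizable, invertible, unit-determinant Mueller matrix cannot decrease
the Minkowski metric of any admissible Stokes vector. -/
theorem minkowski_nondecreasing_of_physical_mueller
    (M : Matrix (Fin 4) (Fin 4) ℝ) (hinv : IsUnit M) (hdet : M.det = 1)
    (hphys : (cloudeCCM M).PosSemidef) :
    ∀ s : Fin 4 → ℝ, StokesAdmissible s →
      s ⬝ᵥ G.mulVec s ≤ (M.mulVec s) ⬝ᵥ G.mulVec (M.mulVec s) := by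
  have hcone : ∀ t : Fin 4 → ℝ, 0 ≤ t 0 → 0 ≤ MuellerAux.Qf t →
      0 ≤ MuellerAux.Qf (M *ᵥ t) :=
    fun t h1 h2 => (MuellerAux.mueller_cone M hphys t h1 h2).2
  exact MuellerAux.final M hinv hdet hcone
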